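/- arXiv:0812.1655 — 5 statements merged into one kernel-verified Lean document; each statement's English description precedes it below -/
import Mathlib

section
/- Let f : ℝ² → ℝ be C² with f(x;x) = 0 for all x, and suppose at a point x₀, ∂₁f(x₀;x₀) > C/2 for some C > 0, and all second-order partial derivatives of f are bounded by C′ on a neighborhood. Then for all y with 0 < |y − x₀| < C/(2C′): f(y;x₀) > C(y − x₀)/4 if y > x₀ (so (y−x₀)f(y;x₀) > 0), and f(x₀;y) < C(x₀−y)/4, hence f(y;x₀)·f(x₀;y) < 0. -/
noncomputable def p1 (f : ℝ × ℝ → ℝ) (a b : ℝ) : ℝ := deriv (fun u => f (u, b)) a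
noncomputable def p2 (f : ℝ × ℝ → ℝ) (a b : ℝ) : ℝ := deriv (fun v => f (a, v)) b
noncomputable def p11 (f : ℝ × ℝ → ℝ) (a b : ℝ) : ℝ := deriv (fun u => p1 f u b) a
noncomputable def p12 (f : ℝ × ℝ → ℝ) (a b : ℝ) : ℝ := deriv (fun v => p1 f a v) b
noncomputable def p22 (f : ℝ × ℝ → ℝ) (a b : ℝ) : ℝ := deriv (fun v => p2 f a v) b

/-- Second-order Taylor bound with the sharp factor `K/2`. -/
lemma taylor_half {g : ℝ → ℝ} (hg : Differentiable ℝ g) (hg' : Differentiable ℝ (deriv g))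
    {K : ℝ} (hbd : ∀ t, |deriv (deriv g) t| ≤ K) (x₀ y : ℝ) :
    |g y - g x₀ - deriv g x₀ * (y - x₀)| ≤ K / 2 * (y - x₀) ^ 2 := by
  have lip : ∀ a b : ℝ, |deriv g a - deriv g b| ≤ K * |a - b| := by
    intro a b
    have := Convex.norm_image_sub_le_of_norm_deriv_le (f := deriv g) (s := Set.univ)
      (fun x _ => hg'.differentiableAt) (fun x _ => hbd x) convex_univ
      (Set.mem_univ b) (Set.mem_univ a)
    simpa [Real.norm_eq_abs] using this
  set φ : ℝ → ℝ := fun t => g t - g x₀ - deriv g x₀ * (t - x₀) - K / 2 * (t - x₀) ^ 2 with hφ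
  set ψ : ℝ → ℝ := fun t => g t - g x₀ - deriv g x₀ * (t - x₀) + K / 2 * (t - x₀) ^ 2 with hψ
  have h2 : ∀ t : ℝ, HasDerivAt (fun t : ℝ => g x₀ + deriv g x₀ * (t - x₀)) (deriv g x₀) t := by
    intro t
    simpa using (((hasDerivAt_id t).sub_const x₀).const_mul (deriv g x₀)).const_add (g x₀)
  have h3 : ∀ t : ℝ, HasDerivAt (fun t : ℝ => K / 2 * (t - x₀) ^ 2) (K * (t - x₀)) t := by
    intro t
    have h := (((hasDerivAt_id t).sub_const x₀).pow 2).const_mul (K / 2)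
    refine h.congr_deriv ?_
    simp [id]
    ring
  have hφd : ∀ t : ℝ, HasDerivAt φ (deriv g t - deriv g x₀ - K * (t - x₀)) t := by
    intro t
    have Hfun : φ = fun s => g s - (g x₀ + deriv g x₀ * (s - x₀)) - K / 2 * (s - x₀) ^ 2 := by
      funext s; simp only [hφ]; ring
    rw [Hfun]
    exact ((hg t).hasDerivAt.sub (h2 t)).sub (h3 t)
  have hψd : ∀ t : ℝ, HasDerivAt ψ (deriv g t - deriv g x₀ + K * (t - x₀)) t := by
    intro t
    have Hfun : ψ = fun s => g s - (g x₀ + deriv g x₀ * (s - x₀)) + K / 2 * (s - x₀) ^ 2 := by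
      funext s; simp only [hψ]; ring
    rw [Hfun]
    exact ((hg t).hasDerivAt.sub (h2 t)).add (h3 t)
  have hφdiff : Differentiable ℝ φ := fun t => (hφd t).differentiableAt
  have hψdiff : Differentiable ℝ ψ := fun t => (hψd t).differentiableAt
  have hφ0 : φ x₀ = 0 := by simp [hφ]
  have hψ0 : ψ x₀ = 0 := by simp [hψ]
  have key : φ y ≤ 0 ∧ 0 ≤ ψ y := by
    rcases le_total x₀ y with hxy | hxy
    · constructor
      · have hanti : AntitoneOn φ (Set.Icc x₀ y) := by
          apply antitoneOn_of_deriv_nonpos (convex_Icc x₀ y) hφdiff.continuous.continuousOn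
            hφdiff.differentiableOn
          intro t ht
          rw [interior_Icc] at ht
          rw [(hφd t).deriv]
          have h1 : deriv g t - deriv g x₀ ≤ K * |t - x₀| :=
            (le_abs_self _).trans (lip t x₀)
          rw [abs_of_nonneg (by linarith [ht.1] : (0:ℝ) ≤ t - x₀)] at h1
          linarith
        have := hanti (Set.left_mem_Icc.2 hxy) (Set.right_mem_Icc.2 hxy) hxy
        linarith [hφ0]
      · have hmono : MonotoneOn ψ (Set.Icc x₀ y) := by
          apply monotoneOn_of_deriv_nonneg (convex_Icc x₀ y) hψdiff.continuous.continuousOn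
            hψdiff.differentiableOn
          intro t ht
          rw [interior_Icc] at ht
          rw [(hψd t).deriv]
          have h1 : deriv g x₀ - deriv g t ≤ K * |t - x₀| := by
            have := (le_abs_self _).trans (lip x₀ t)
            rwa [abs_sub_comm] at this
          rw [abs_of_nonneg (by linarith [ht.1] : (0:ℝ) ≤ t - x₀)] at h1
          linarith
        have := hmono (Set.left_mem_Icc.2 hxy) (Set.right_mem_Icc.2 hxy) hxy
        linarith [hψ0]
    · constructor
      · have hmono : MonotoneOn φ (Set.Icc y x₀) := by
          apply monotoneOn_of_deriv_nonneg (convex_Icc y x₀) hφdiff.continuous.continuousOn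
            hφdiff.differentiableOn
          intro t ht
          rw [interior_Icc] at ht
          rw [(hφd t).deriv]
          have h1 : deriv g x₀ - deriv g t ≤ K * |t - x₀| := by
            have := (le_abs_self _).trans (lip x₀ t)
            rwa [abs_sub_comm] at this
          rw [abs_sub_comm, abs_of_nonneg (by linarith [ht.2] : (0:ℝ) ≤ x₀ - t)] at h1
          linarith
        have := hmono (Set.left_mem_Icc.2 hxy) (Set.right_mem_Icc.2 hxy) hxy
        linarith [hφ0]
      · have hanti : AntitoneOn ψ (Set.Icc y x₀) := by
          apply antitoneOn_of_deriv_nonpos (convex_Icc y x₀) hψdiff.continuous.continuousOn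
            hψdiff.differentiableOn
          intro t ht
          rw [interior_Icc] at ht
          rw [(hψd t).deriv]
          have h1 : deriv g t - deriv g x₀ ≤ K * |t - x₀| :=
            (le_abs_self _).trans (lip t x₀)
          rw [abs_sub_comm, abs_of_nonneg (by linarith [ht.2] : (0:ℝ) ≤ x₀ - t)] at h1
          linarith
        have := hanti (Set.left_mem_Icc.2 hxy) (Set.right_mem_Icc.2 hxy) hxy
        linarith [hψ0]
  obtain ⟨k1, k2⟩ := key
  simp only [hφ] at k1
  simp only [hψ] at k2
  rw [abs_le]
  constructor
  · linarith
  · linarith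

/-- Near a point x₀ where the selection gradient exceeds C/2 and the second
derivatives of the fitness are bounded by C′, nearby mutants of the right sign invade
while inducing negative reverse fitness: `(y−x₀)f(y;x₀) > 0` and
`f(y;x₀)·f(x₀;y) < 0`, with the quantitative lower bounds when y > x₀. -/
theorem invasion_implies_fixation_near_nonsingular
    (f : ℝ × ℝ → ℝ) (hf : ContDiff ℝ 2 f) (hdiag : ∀ x : ℝ, f (x, x) = 0)
    (x₀ C C' : ℝ) (hC : 0 < C) (hC' : 0 < C')
    (hgrad : C / 2 < p1 f x₀ x₀)
    (hbdd : ∀ u v : ℝ, |p11 f u v| ≤ C' ∧ |p12 f u v| ≤ C' ∧ |p22 f u v| ≤ C') :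
    ∀ y : ℝ, y ≠ x₀ → |y - x₀| < C / (2 * C') →
      0 < (y - x₀) * f (y, x₀) ∧
      f (y, x₀) * f (x₀, y) < 0 ∧
      (x₀ < y → C * (y - x₀) / 4 < f (y, x₀) ∧ f (x₀, y) < C * (x₀ - y) / 4) := by
  -- the two partial functions
  set g : ℝ → ℝ := fun u => f (u, x₀) with hgdef
  set h : ℝ → ℝ := fun v => f (x₀, v) with hhdef
  have hg2 : ContDiff ℝ 2 g := hf.comp (contDiff_id.prodMk contDiff_const)
  have hh2 : ContDiff ℝ 2 h := hf.comp (contDiff_const.prodMk contDiff_id)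
  have hg2' := (contDiff_succ_iff_deriv (n := 1)).1 (by exact_mod_cast hg2)
  have hh2' := (contDiff_succ_iff_deriv (n := 1)).1 (by exact_mod_cast hh2)
  have hgd : Differentiable ℝ g := hg2'.1
  have hhd : Differentiable ℝ h := hh2'.1
  have hgd' : Differentiable ℝ (deriv g) := hg2'.2.2.differentiable (by norm_num)
  have hhd' : Differentiable ℝ (deriv h) := hh2'.2.2.differentiable (by norm_num)
  have hgbd : ∀ t, |deriv (deriv g) t| ≤ C' := fun t => (hbdd t x₀).1
  have hhbd : ∀ t, |deriv (deriv h) t| ≤ C' := fun t => (hbdd x₀ t).2.2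
  -- the diagonal relation p2 = -p1 at (x₀,x₀)
  have hfd : Differentiable ℝ f := hf.differentiable (by norm_num)
  have hF : HasFDerivAt f (fderiv ℝ f (x₀, x₀)) (x₀, x₀) := (hfd _).hasFDerivAt
  set L := fderiv ℝ f (x₀, x₀) with hL
  have hdiagL : HasDerivAt (fun x : ℝ => f (x, x)) (L (1, 1)) x₀ := by
    have hid : HasDerivAt (fun x : ℝ => ((x, x) : ℝ × ℝ)) ((1 : ℝ), (1 : ℝ)) x₀ :=
      (hasDerivAt_id x₀).prodMk (hasDerivAt_id x₀)
    exact hF.comp_hasDerivAt_of_eq x₀ hid rfl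
  have hL11 : L (1, 1) = 0 := by
    have : HasDerivAt (fun _ : ℝ => (0 : ℝ)) (L (1, 1)) x₀ := by
      convert hdiagL using 2 with x
      · exact (hdiag x).symm
    simpa using ((hasDerivAt_const x₀ (0 : ℝ)).unique this).symm
  have hp1L : p1 f x₀ x₀ = L (1, 0) := by
    have hid : HasDerivAt (fun u : ℝ => ((u, x₀) : ℝ × ℝ)) ((1 : ℝ), (0 : ℝ)) x₀ :=
      (hasDerivAt_id x₀).prodMk (hasDerivAt_const x₀ x₀)
    exact (hF.comp_hasDerivAt_of_eq x₀ hid rfl).deriv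
  have hp2L : p2 f x₀ x₀ = L (0, 1) := by
    have hid : HasDerivAt (fun v : ℝ => ((x₀, v) : ℝ × ℝ)) ((0 : ℝ), (1 : ℝ)) x₀ :=
      (hasDerivAt_const x₀ x₀).prodMk (hasDerivAt_id x₀)
    exact (hF.comp_hasDerivAt_of_eq x₀ hid rfl).deriv
  have hsum : p1 f x₀ x₀ + p2 f x₀ x₀ = 0 := by
    rw [hp1L, hp2L, ← map_add,
      show ((1:ℝ),(0:ℝ)) + ((0:ℝ),(1:ℝ)) = ((1:ℝ),(1:ℝ)) by simp [Prod.ext_iff], hL11]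
  -- Taylor bounds
  intro y hy hnear
  have hT1 := taylor_half hgd hgd' hgbd x₀ y
  have hT2 := taylor_half hhd hhd' hhbd x₀ y
  have hgx₀ : g x₀ = 0 := hdiag x₀
  have hhx₀ : h x₀ = 0 := hdiag x₀
  have hdg : deriv g x₀ = p1 f x₀ x₀ := rfl
  have hdh : deriv h x₀ = p2 f x₀ x₀ := rfl
  rw [hgx₀, hdg] at hT1
  rw [hhx₀, hdh] at hT2
  set A := p1 f x₀ x₀ with hA
  have hBneg : p2 f x₀ x₀ = -A := by linarith
  rw [hBneg] at hT2
  have hgy : g y = f (y, x₀) := rfl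
  have hhy : h y = f (x₀, y) := rfl
  rw [hgy] at hT1
  rw [hhy] at hT2
  have habs : 0 < |y - x₀| := abs_pos.2 (sub_ne_zero.2 hy)
  -- C'/2 * (y - x₀)^2 < C/4 * |y - x₀|
  have hquad : C' / 2 * (y - x₀) ^ 2 < C / 4 * |y - x₀| := by
    have h1 : (y - x₀) ^ 2 = |y - x₀| * |y - x₀| := by
      rw [← sq_abs, sq]
    rw [h1]
    have h2 := mul_lt_mul_of_pos_left hnear (by positivity : (0:ℝ) < C' / 2 * |y - x₀|)
    have h3 : C' / 2 * |y - x₀| * (C / (2 * C')) = C / 4 * |y - x₀| := by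
      field_simp
      ring
    calc C' / 2 * (|y - x₀| * |y - x₀|) = C' / 2 * |y - x₀| * |y - x₀| := by ring
      _ < C' / 2 * |y - x₀| * (C / (2 * C')) := h2
      _ = C / 4 * |y - x₀| := h3
  rw [abs_le] at hT1 hT2
  rcases lt_or_gt_of_ne hy with hlt | hgt
  · -- y < x₀
    have habs' : |y - x₀| = x₀ - y := by rw [abs_sub_comm]; exact abs_of_pos (by linarith)
    rw [habs'] at hquad
    have hAr : A * (y - x₀) < C / 2 * (y - x₀) :=
      mul_lt_mul_of_neg_right hgrad (by linarith)
    have hfy : f (y, x₀) < C / 4 * (y - x₀) := by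
      have := hT1.2
      linarith
    have hfx : C / 4 * (x₀ - y) < f (x₀, y) := by
      have := hT2.1
      linarith
    have hs1 : C / 4 * (y - x₀) < 0 := mul_neg_of_pos_of_neg (by linarith) (by linarith)
    have hs2 : 0 < C / 4 * (x₀ - y) := mul_pos (by linarith) (by linarith)
    have hfy0 : f (y, x₀) < 0 := by linarith
    have hfx0 : 0 < f (x₀, y) := by linarith
    exact ⟨mul_pos_of_neg_of_neg (by linarith) hfy0,
      mul_neg_of_neg_of_pos hfy0 hfx0,
      fun hc => absurd hc (by linarith)⟩
  · -- x₀ < y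
    have habs' : |y - x₀| = y - x₀ := abs_of_pos (by linarith)
    rw [habs'] at hquad
    have hAr : C / 2 * (y - x₀) < A * (y - x₀) :=
      mul_lt_mul_of_pos_right hgrad (by linarith)
    have hfy : C / 4 * (y - x₀) < f (y, x₀) := by
      have := hT1.1
      linarith
    have hfx : f (x₀, y) < C / 4 * (x₀ - y) := by
      have := hT2.2
      linarith
    have hs1 : 0 < C / 4 * (y - x₀) := mul_pos (by linarith) (by linarith)
    have hs2 : C / 4 * (x₀ - y) < 0 := mul_neg_of_pos_of_neg (by linarith) (by linarith)
    have hfy0 : 0 < f (y, x₀) := by linarith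
    have hfx0 : f (x₀, y) < 0 := by linarith
    exact ⟨mul_pos (by linarith) hfy0,
      mul_neg_of_pos_of_neg hfy0 hfx0,
      fun _ => ⟨by linarith, by linarith⟩⟩
end

section
/- Let f : ℝ² → ℝ be C² with f(x;x) = 0 for all x and with an evolutionary singularity at x*; set a = ∂₁₁f(x*;x*), c = ∂₂₂f(x*;x*). If a + c > 0, then every neighborhood of x* contains points x ≠ y with f(x;y) > 0 and f(y;x) > 0 (coexistence). If a + c < 0, then there is a neighborhood U of x* such that no two distinct points x, y ∈ U satisfy both f(x;y) > 0 and f(y;x) > 0. -/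
lemma chain1 {f : ℝ × ℝ → ℝ} (hf : ContDiff ℝ 2 f) (p v : ℝ × ℝ) (t : ℝ) :
    HasDerivAt (fun s : ℝ => f (p + s • v)) (fderiv ℝ f (p + t • v) v) t := by
  have hc : HasDerivAt (fun s : ℝ => p + s • v) v t := by
    simpa using ((hasDerivAt_id t).smul_const v).const_add p
  have hfd : HasFDerivAt f (fderiv ℝ f (p + t • v)) (p + t • v) :=
    (hf.differentiable (by norm_num) _).hasFDerivAt
  exact hfd.comp_hasDerivAt t hc

lemma chain2 {f : ℝ × ℝ → ℝ} (hf : ContDiff ℝ 2 f) (p v : ℝ × ℝ) (t : ℝ) :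
    HasDerivAt (fun s : ℝ => fderiv ℝ f (p + s • v) v)
      (fderiv ℝ (fderiv ℝ f) (p + t • v) v v) t := by
  have hc : HasDerivAt (fun s : ℝ => p + s • v) v t := by
    simpa using ((hasDerivAt_id t).smul_const v).const_add p
  have hF : ContDiff ℝ 1 (fderiv ℝ f) := hf.fderiv_right (by norm_num)
  have hfd : HasFDerivAt (fderiv ℝ f) (fderiv ℝ (fderiv ℝ f) (p + t • v)) (p + t • v) :=
    (hF.differentiable one_ne_zero _).hasFDerivAt
  have h1 : HasDerivAt (fun s : ℝ => fderiv ℝ f (p + s • v))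
      (fderiv ℝ (fderiv ℝ f) (p + t • v) v) t := hfd.comp_hasDerivAt t hc
  have h2 := h1.clm_apply (hasDerivAt_const t v)
  simpa using h2

lemma p1_eq {f : ℝ × ℝ → ℝ} (hf : ContDiff ℝ 2 f) (a b : ℝ) :
    p1 f a b = fderiv ℝ f (a, b) (1, 0) := by
  have h := chain1 hf (0, b) ((1:ℝ), (0:ℝ)) a
  have he : (fun s : ℝ => f (((0:ℝ), b) + s • ((1:ℝ), (0:ℝ)))) = fun u => f (u, b) := by
    funext u
    norm_num [Prod.smul_mk, Prod.mk_add_mk]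
  have h2 : ((0:ℝ), b) + a • ((1:ℝ), (0:ℝ)) = (a, b) := by
    norm_num [Prod.smul_mk, Prod.mk_add_mk]
  rw [he, h2] at h
  exact h.deriv

lemma p2_eq {f : ℝ × ℝ → ℝ} (hf : ContDiff ℝ 2 f) (a b : ℝ) :
    p2 f a b = fderiv ℝ f (a, b) (0, 1) := by
  have h := chain1 hf (a, 0) ((0:ℝ), (1:ℝ)) b
  have he : (fun s : ℝ => f ((a, (0:ℝ)) + s • ((0:ℝ), (1:ℝ)))) = fun v => f (a, v) := by
    funext u
    norm_num [Prod.smul_mk, Prod.mk_add_mk]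
  have h2 : (a, (0:ℝ)) + b • ((0:ℝ), (1:ℝ)) = (a, b) := by
    norm_num [Prod.smul_mk, Prod.mk_add_mk]
  rw [he, h2] at h
  exact h.deriv

lemma p11_eq {f : ℝ × ℝ → ℝ} (hf : ContDiff ℝ 2 f) (a b : ℝ) :
    p11 f a b = fderiv ℝ (fderiv ℝ f) (a, b) (1, 0) (1, 0) := by
  have h := chain2 hf (0, b) ((1:ℝ), (0:ℝ)) a
  have he : (fun s : ℝ => fderiv ℝ f (((0:ℝ), b) + s • ((1:ℝ), (0:ℝ))) (1, 0))
      = fun u => p1 f u b := by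
    funext u
    rw [p1_eq hf]
    norm_num [Prod.smul_mk, Prod.mk_add_mk]
  have h2 : ((0:ℝ), b) + a • ((1:ℝ), (0:ℝ)) = (a, b) := by
    norm_num [Prod.smul_mk, Prod.mk_add_mk]
  rw [he, h2] at h
  exact h.deriv

lemma p22_eq {f : ℝ × ℝ → ℝ} (hf : ContDiff ℝ 2 f) (a b : ℝ) :
    p22 f a b = fderiv ℝ (fderiv ℝ f) (a, b) (0, 1) (0, 1) := by
  have h := chain2 hf (a, 0) ((0:ℝ), (1:ℝ)) b
  have he : (fun s : ℝ => fderiv ℝ f ((a, (0:ℝ)) + s • ((0:ℝ), (1:ℝ))) (0, 1))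
      = fun v => p2 f a v := by
    funext u
    rw [p2_eq hf]
    norm_num [Prod.smul_mk, Prod.mk_add_mk]
  have h2 : (a, (0:ℝ)) + b • ((0:ℝ), (1:ℝ)) = (a, b) := by
    norm_num [Prod.smul_mk, Prod.mk_add_mk]
  rw [he, h2] at h
  exact h.deriv

lemma diag_fst {f : ℝ × ℝ → ℝ} (hf : ContDiff ℝ 2 f) (hdiag : ∀ x : ℝ, f (x, x) = 0)
    (u t : ℝ) : fderiv ℝ f ((u, u) + t • ((1:ℝ), (1:ℝ))) (1, 1) = 0 := by
  have h := chain1 hf (u, u) ((1:ℝ), (1:ℝ)) t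
  have hk : (fun s : ℝ => f ((u, u) + s • ((1:ℝ), (1:ℝ)))) = fun _ => (0:ℝ) := by
    funext s
    have : ((u:ℝ), u) + s • ((1:ℝ), (1:ℝ)) = (u + s, u + s) := by
      simp [Prod.ext_iff]
    rw [this, hdiag]
  rw [hk] at h
  exact h.unique (hasDerivAt_const t 0)

lemma diag_snd {f : ℝ × ℝ → ℝ} (hf : ContDiff ℝ 2 f) (hdiag : ∀ x : ℝ, f (x, x) = 0)
    (u : ℝ) : fderiv ℝ (fderiv ℝ f) (u, u) (1, 1) (1, 1) = 0 := by
  have h := chain2 hf (u, u) ((1:ℝ), (1:ℝ)) 0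
  have hz : ((u:ℝ), u) + (0:ℝ) • ((1:ℝ), (1:ℝ)) = (u, u) := by
    norm_num [Prod.smul_mk, Prod.mk_add_mk]
  rw [hz] at h
  have hk : (fun s : ℝ => fderiv ℝ f ((u, u) + s • ((1:ℝ), (1:ℝ))) (1, 1)) = fun _ => (0:ℝ) := by
    funext s
    exact diag_fst hf hdiag u s
  rw [hk] at h
  exact (h.unique (hasDerivAt_const 0 0)).symm ▸ rfl

lemma parallelogram (B : ℝ × ℝ →L[ℝ] (ℝ × ℝ →L[ℝ] ℝ)) :
    B (1, -1) (1, -1) = 2 * B (1, 0) (1, 0) + 2 * B (0, 1) (0, 1) - B (1, 1) (1, 1) := by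
  have e1 : ((1:ℝ), (-1:ℝ)) = ((1:ℝ), (0:ℝ)) - ((0:ℝ), (1:ℝ)) := by
    norm_num [Prod.mk_sub_mk]
  have e2 : ((1:ℝ), (1:ℝ)) = ((1:ℝ), (0:ℝ)) + ((0:ℝ), (1:ℝ)) := by
    norm_num [Prod.mk_add_mk]
  rw [e1, e2]
  simp only [map_add, map_sub, ContinuousLinearMap.add_apply, ContinuousLinearMap.sub_apply]
  ring

lemma pt_eq (m s : ℝ) : ((m, m) : ℝ × ℝ) + s • ((1:ℝ), (-1:ℝ)) = (m + s, m - s) := by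
  simp [Prod.ext_iff]
  ring

lemma dist_pair (m s xs : ℝ) : dist ((m + s, m - s) : ℝ × ℝ) (xs, xs) ≤ |m - xs| + |s| := by
  have h1 : |m + s - xs| ≤ |m - xs| + |s| := by
    calc |m + s - xs| = |(m - xs) + s| := by ring_nf
    _ ≤ |m - xs| + |s| := abs_add_le _ _
  have h2 : |m - s - xs| ≤ |m - xs| + |s| := by
    calc |m - s - xs| = |(m - xs) + (-s)| := by ring_nf
    _ ≤ |m - xs| + |-s| := abs_add_le _ _
    _ = |m - xs| + |s| := by rw [abs_neg]
  rw [Prod.dist_eq]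
  simp only [Real.dist_eq]
  exact max_le h1 h2


open Set in

lemma signlem {h h' h'' : ℝ → ℝ} {r : ℝ} (hr : 0 < r)
    (hd : ∀ t, HasDerivAt h (h' t) t) (hd2 : ∀ t, HasDerivAt h' (h'' t) t)
    (h0 : h 0 = 0) (h'0 : h' 0 = 0) (hneg : ∀ s, |s| ≤ r → h'' s < 0) :
    ∀ t, t ≠ 0 → |t| ≤ r → h t < 0 := by
  have hcont : Continuous h := by
    have : Differentiable ℝ h := fun x => (hd x).differentiableAt
    exact this.continuous
  have hcont' : Continuous h' := by
    have : Differentiable ℝ h' := fun x => (hd2 x).differentiableAt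
    exact this.continuous
  -- h' is strictly anti on [-r, r]
  have hanti : StrictAntiOn h' (Icc (-r) r) := by
    apply strictAntiOn_of_deriv_neg (convex_Icc _ _) hcont'.continuousOn
    intro x hx
    rw [interior_Icc] at hx
    obtain ⟨hx1, hx2⟩ := hx
    rw [(hd2 x).deriv]
    exact hneg x (abs_le.mpr ⟨hx1.le, hx2.le⟩)
  intro t ht htr
  have habs := abs_le.mp htr
  rcases ht.lt_or_gt with htneg | htpos
  · -- t < 0 : h strictly mono on [-r, 0], h t < h 0
    have hmono : StrictMonoOn h (Icc (-r) 0) := by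
      apply strictMonoOn_of_deriv_pos (convex_Icc _ _) hcont.continuousOn
      intro x hx
      rw [interior_Icc] at hx
      obtain ⟨hx1, hx2⟩ := hx
      rw [(hd x).deriv]
      have := hanti (mem_Icc.mpr ⟨hx1.le, by linarith⟩) (mem_Icc.mpr ⟨by linarith, hr.le⟩) hx2
      rw [h'0] at this; linarith
    have := hmono (mem_Icc.mpr ⟨habs.1, htneg.le⟩) (mem_Icc.mpr ⟨by linarith, le_rfl⟩) htneg
    rwa [h0] at this
  · -- t > 0 : h strictly anti on [0, r]
    have hmono : StrictAntiOn h (Icc 0 r) := by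
      apply strictAntiOn_of_deriv_neg (convex_Icc _ _) hcont.continuousOn
      intro x hx
      rw [interior_Icc] at hx
      obtain ⟨hx1, hx2⟩ := hx
      rw [(hd x).deriv]
      have := hanti (mem_Icc.mpr ⟨by linarith, hr.le⟩) (mem_Icc.mpr ⟨by linarith, hx2.le⟩) hx1
      rw [h'0] at this; linarith
    have := hmono (mem_Icc.mpr ⟨le_rfl, hr.le⟩) (mem_Icc.mpr ⟨htpos.le, habs.2⟩) htpos
    rwa [h0] at this

/-- Coexistence criterion near an evolutionary singularity x*: with
a = ∂₁₁f(x*;x*) and c = ∂₂₂f(x*;x*), if a + c > 0 then every neighborhood of x*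
contains two distinct coexisting traits (f(x;y) > 0 and f(y;x) > 0), while if
a + c < 0 no two distinct traits near x* coexist.  Here `f (x, y)` is f(x;y). -/
theorem coexistence_criterion_near_singularity
    (f : ℝ × ℝ → ℝ) (hf : ContDiff ℝ 2 f) (hdiag : ∀ x : ℝ, f (x, x) = 0)
    (xs : ℝ) (hsing1 : p1 f xs xs = 0) (hsing2 : p2 f xs xs = 0) :
    (0 < p11 f xs xs + p22 f xs xs →
      ∀ ε : ℝ, 0 < ε → ∃ x y : ℝ, x ≠ y ∧ |x - xs| < ε ∧ |y - xs| < ε ∧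
        0 < f (x, y) ∧ 0 < f (y, x)) ∧
    (p11 f xs xs + p22 f xs xs < 0 →
      ∃ ε : ℝ, 0 < ε ∧ ∀ x y : ℝ, |x - xs| < ε → |y - xs| < ε → x ≠ y →
        ¬(0 < f (x, y) ∧ 0 < f (y, x))) := by
  set B := fderiv ℝ (fderiv ℝ f) with hB
  set R : ℝ × ℝ → ℝ := fun p => B p (1, -1) (1, -1) with hRdef
  have hF : ContDiff ℝ 1 (fderiv ℝ f) := hf.fderiv_right (by norm_num)
  have hBc : Continuous B := hF.continuous_fderiv one_ne_zero
  have hRcont : Continuous R := (hBc.clm_apply continuous_const).clm_apply continuous_const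
  have hRxs : R (xs, xs) = 2 * (p11 f xs xs + p22 f xs xs) := by
    have := parallelogram (B (xs, xs))
    rw [hRdef]
    simp only []
    rw [this, diag_snd hf hdiag xs, ← p11_eq hf, ← p22_eq hf]
    ring
  -- the derivative structure along direction (1,-1)
  have hd1 : ∀ (m s : ℝ), HasDerivAt (fun s : ℝ => f ((m, m) + s • ((1:ℝ), (-1:ℝ))))
      (fderiv ℝ f ((m, m) + s • ((1:ℝ), (-1:ℝ))) (1, -1)) s := fun m s => chain1 hf _ _ s
  have hd2 : ∀ (m s : ℝ), HasDerivAt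
      (fun s : ℝ => fderiv ℝ f ((m, m) + s • ((1:ℝ), (-1:ℝ))) (1, -1))
      (R ((m, m) + s • ((1:ℝ), (-1:ℝ)))) s := fun m s => chain2 hf _ _ s
  constructor
  · -- a + c > 0 : coexistence
    intro hA ε hε
    have hlt : (0:ℝ) < R (xs, xs) := by rw [hRxs]; linarith
    have hev : ∀ᶠ p in nhds ((xs, xs) : ℝ × ℝ), 0 < R p :=
      hRcont.continuousAt.eventually_const_lt hlt
    obtain ⟨δ, hδ, hball⟩ := Metric.eventually_nhds_iff.mp hev
    set t := min (ε / 2) (δ / 2) with ht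
    have htpos : 0 < t := by positivity
    have htε : t < ε := lt_of_le_of_lt (min_le_left _ _) (by linarith)
    have htδ : t < δ := lt_of_le_of_lt (min_le_right _ _) (by linarith)
    -- h s := f (xs + s, xs - s) is positive for 0 < |s| ≤ t
    have hpos : ∀ s : ℝ, s ≠ 0 → |s| ≤ t → 0 < f (xs + s, xs - s) := by
      have key := signlem (h := fun s => -(f ((xs, xs) + s • ((1:ℝ), (-1:ℝ)))))
        (h' := fun s => -(fderiv ℝ f ((xs, xs) + s • ((1:ℝ), (-1:ℝ))) (1, -1)))
        (h'' := fun s => -(R ((xs, xs) + s • ((1:ℝ), (-1:ℝ))))) (r := t) htpos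
        (fun s => (hd1 xs s).neg) (fun s => (hd2 xs s).neg)
        (by simp [pt_eq]; exact hdiag xs)
        (by
          simp only [neg_eq_zero]
          have he : ((1:ℝ), (-1:ℝ)) = ((1:ℝ), (0:ℝ)) - ((0:ℝ), (1:ℝ)) := by
            norm_num [Prod.mk_sub_mk]
          rw [show ((xs, xs) : ℝ × ℝ) + (0:ℝ) • ((1:ℝ), (-1:ℝ)) = (xs, xs) by simp, he,
            map_sub, ← p1_eq hf, ← p2_eq hf, hsing1, hsing2]
          ring)
        (by
          intro s hs
          simp only [neg_neg, Left.neg_neg_iff]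
          apply hball
          rw [pt_eq]
          calc dist ((xs + s, xs - s) : ℝ × ℝ) (xs, xs) ≤ |xs - xs| + |s| := dist_pair _ _ _
          _ = |s| := by simp
          _ < δ := lt_of_le_of_lt hs htδ)
      intro s hs hst
      have := key s hs hst
      simp only [pt_eq] at this
      linarith
    refine ⟨xs + t, xs - t, by intro hcon; apply htpos.ne'; linarith [hcon],
      by rw [show xs + t - xs = t by ring, abs_of_pos htpos]; exact htε,
      by rw [show xs - t - xs = -t by ring, abs_neg, abs_of_pos htpos]; exact htε,
      hpos t htpos.ne' (by rw [abs_of_pos htpos]), ?_⟩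
    have := hpos (-t) (by simp [htpos.ne']) (by rw [abs_neg, abs_of_pos htpos])
    have he : (xs + -t, xs - -t) = (xs - t, xs + t) := by norm_num; ring_nf
    rw [he] at this
    exact this
  · -- a + c < 0 : no coexistence
    intro hA
    have hlt : R (xs, xs) < 0 := by rw [hRxs]; linarith
    have hev : ∀ᶠ p in nhds ((xs, xs) : ℝ × ℝ), R p < 0 :=
      hRcont.continuousAt.eventually_lt_const hlt
    obtain ⟨δ, hδ, hball⟩ := Metric.eventually_nhds_iff.mp hev
    refine ⟨δ / 4, by positivity, ?_⟩
    intro x y hx hy hxy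
    rintro ⟨hfxy, hfyx⟩
    set m := (x + y) / 2 with hm
    set t := (x - y) / 2 with htdef
    have htne : t ≠ 0 := by
      rw [htdef]; intro hcon; apply hxy; have : x - y = 0 := by linarith
      linarith
    have hax := abs_lt.mp hx
    have hay := abs_lt.mp hy
    have htlt : |t| < δ / 4 := by
      rw [abs_lt]; constructor <;> linarith [hax.1, hax.2, hay.1, hay.2]
    have hmlt : |m - xs| < δ / 4 := by
      rw [abs_lt]; constructor <;> linarith [hax.1, hax.2, hay.1, hay.2]
    -- φ s = f(m+s, m-s) + f(m-s, m+s)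
    have hdneg1 : ∀ s : ℝ, HasDerivAt (fun s : ℝ => f ((m, m) + (-s) • ((1:ℝ), (-1:ℝ))))
        (fderiv ℝ f ((m, m) + (-s) • ((1:ℝ), (-1:ℝ))) (1, -1) * (-1)) s := by
      intro s
      exact HasDerivAt.comp s (hd1 m (-s)) (hasDerivAt_neg s)
    have hdneg2 : ∀ s : ℝ, HasDerivAt
        (fun s : ℝ => fderiv ℝ f ((m, m) + (-s) • ((1:ℝ), (-1:ℝ))) (1, -1) * (-1))
        (R ((m, m) + (-s) • ((1:ℝ), (-1:ℝ))) * (-1) * (-1)) s := by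
      intro s
      exact ((HasDerivAt.comp s (hd2 m (-s)) (hasDerivAt_neg s))).mul_const (-1)
    have hRin : ∀ s : ℝ, |s| ≤ |t| → R ((m, m) + s • ((1:ℝ), (-1:ℝ))) < 0 := by
      intro s hs
      apply hball
      rw [pt_eq]
      calc dist ((m + s, m - s) : ℝ × ℝ) (xs, xs) ≤ |m - xs| + |s| := dist_pair _ _ _
      _ < δ / 4 + δ / 4 := by have := lt_of_le_of_lt hs htlt; linarith
      _ < δ := by linarith
    have key := signlem
      (h := fun s : ℝ => f ((m, m) + s • ((1:ℝ), (-1:ℝ))) + f ((m, m) + (-s) • ((1:ℝ), (-1:ℝ))))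
      (h' := fun s : ℝ => fderiv ℝ f ((m, m) + s • ((1:ℝ), (-1:ℝ))) (1, -1)
        + fderiv ℝ f ((m, m) + (-s) • ((1:ℝ), (-1:ℝ))) (1, -1) * (-1))
      (h'' := fun s : ℝ => R ((m, m) + s • ((1:ℝ), (-1:ℝ)))
        + R ((m, m) + (-s) • ((1:ℝ), (-1:ℝ))) * (-1) * (-1))
      (r := |t|) (abs_pos.mpr htne)
      (fun s => (hd1 m s).add (hdneg1 s))
      (fun s => (hd2 m s).add (hdneg2 s))
      (by simp [pt_eq, hdiag m])
      (by simp)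
      (by
        intro s hs
        have h1 := hRin s hs
        have h2 := hRin (-s) (by rwa [abs_neg])
        simp only [mul_neg, mul_one, neg_neg]
        linarith)
      t htne le_rfl
    simp only [pt_eq] at key
    have hx' : m + t = x := by rw [hm, htdef]; ring
    have hy' : m - t = y := by rw [hm, htdef]; ring
    have hx'' : m + -t = y := by rw [hm, htdef]; ring
    have hy'' : m - -t = x := by rw [hm, htdef]; ring
    rw [hx', hy', hx'', hy''] at key
    linarith
end

section
/- Let λ, μ : ℝ → ℝ be C³ and α : ℝ² → ℝ be C⁴ with α(x,x) > 0, set r = λ − μ with r(x*) > 0, n̄(x) = r(x)/α(x,x), and f(y;x) = r(y) − α(y,x)n̄(x). Suppose x* is an evolutionary singularity, i.e. r′(x*) = r(x*)∂₁α(x*,x*)/α(x*,x*). Then with a = ∂₁₁f(x*;x*) and c = ∂₂₂f(x*;x*), one has α(x*,x*)²(a + c) = 2 r(x*)(α(x*,x*)∂₁₂α(x*,x*) − ∂₁α(x*,x*)∂₂α(x*,x*)). -/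
noncomputable def q1 (α : ℝ → ℝ → ℝ) (a b : ℝ) : ℝ := deriv (fun u => α u b) a
noncomputable def q2 (α : ℝ → ℝ → ℝ) (a b : ℝ) : ℝ := deriv (fun v => α a v) b
noncomputable def q12 (α : ℝ → ℝ → ℝ) (a b : ℝ) : ℝ := deriv (fun v => q1 α a v) b

/-- Invasion fitness f(y;x) = r(y) − α(y,x) r(x)/α(x,x), with r = λ − μ. -/
noncomputable def fit (lam mu : ℝ → ℝ) (α : ℝ → ℝ → ℝ) (y x : ℝ) : ℝ :=
  (lam y - mu y) - α y x * ((lam x - mu x) / α x x)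

noncomputable def pd1 (F : ℝ × ℝ → ℝ) (p : ℝ × ℝ) : ℝ := fderiv ℝ F p (1, 0)
noncomputable def pd2 (F : ℝ × ℝ → ℝ) (p : ℝ × ℝ) : ℝ := fderiv ℝ F p (0, 1)

private lemma slice1 (F : ℝ × ℝ → ℝ) (a b : ℝ) (h : DifferentiableAt ℝ F (a, b)) :
    HasDerivAt (fun u => F (u, b)) (pd1 F (a, b)) a :=
  h.hasFDerivAt.comp_hasDerivAt a ((hasDerivAt_id a).prodMk (hasDerivAt_const a b))

private lemma slice2 (F : ℝ × ℝ → ℝ) (a b : ℝ) (h : DifferentiableAt ℝ F (a, b)) :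
    HasDerivAt (fun v => F (a, v)) (pd2 F (a, b)) b :=
  h.hasFDerivAt.comp_hasDerivAt b ((hasDerivAt_const b a).prodMk (hasDerivAt_id b))

private lemma sliceD (F : ℝ × ℝ → ℝ) (a : ℝ) (h : DifferentiableAt ℝ F (a, a)) :
    HasDerivAt (fun u => F (u, u)) (pd1 F (a, a) + pd2 F (a, a)) a := by
  have h' : HasDerivAt (fun u => F (u, u)) (fderiv ℝ F (a, a) (1, 1)) a :=
    HasFDerivAt.comp_hasDerivAt (f := fun u : ℝ => (u, u)) a h.hasFDerivAt
      ((hasDerivAt_id a).prodMk (hasDerivAt_id a))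
  convert h' using 1
  show pd1 F (a, a) + pd2 F (a, a) = fderiv ℝ F (a, a) (1, 1)
  rw [pd1, pd2, ← ContinuousLinearMap.map_add]
  norm_num

private lemma pd1_contDiff {F : ℝ × ℝ → ℝ} (h : ContDiff ℝ 4 F) : ContDiff ℝ 3 (pd1 F) :=
  (ContinuousLinearMap.apply ℝ ℝ ((1 : ℝ), (0 : ℝ))).contDiff.comp
    (h.fderiv_right (by norm_num))

private lemma pd2_contDiff {F : ℝ × ℝ → ℝ} (h : ContDiff ℝ 4 F) : ContDiff ℝ 3 (pd2 F) :=
  (ContinuousLinearMap.apply ℝ ℝ ((0 : ℝ), (1 : ℝ))).contDiff.comp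
    (h.fderiv_right (by norm_num))

private lemma fderiv_pd1 {F : ℝ × ℝ → ℝ} (h4 : ContDiff ℝ 4 F) (p w : ℝ × ℝ) :
    fderiv ℝ (pd1 F) p w = fderiv ℝ (fderiv ℝ F) p w (1, 0) := by
  have hd : HasFDerivAt (fderiv ℝ F) (fderiv ℝ (fderiv ℝ F) p) p :=
    (((h4.fderiv_right (m := 3) (by norm_num)).differentiable (by norm_num)) p).hasFDerivAt
  have h := (ContinuousLinearMap.apply ℝ ℝ ((1 : ℝ), (0 : ℝ))).hasFDerivAt.comp p hd
  have : fderiv ℝ (pd1 F) p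
      = (ContinuousLinearMap.apply ℝ ℝ ((1 : ℝ), (0 : ℝ))).comp (fderiv ℝ (fderiv ℝ F) p) :=
    h.fderiv
  rw [this]; rfl

private lemma fderiv_pd2 {F : ℝ × ℝ → ℝ} (h4 : ContDiff ℝ 4 F) (p w : ℝ × ℝ) :
    fderiv ℝ (pd2 F) p w = fderiv ℝ (fderiv ℝ F) p w (0, 1) := by
  have hd : HasFDerivAt (fderiv ℝ F) (fderiv ℝ (fderiv ℝ F) p) p :=
    (((h4.fderiv_right (m := 3) (by norm_num)).differentiable (by norm_num)) p).hasFDerivAt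
  have h := (ContinuousLinearMap.apply ℝ ℝ ((0 : ℝ), (1 : ℝ))).hasFDerivAt.comp p hd
  have : fderiv ℝ (pd2 F) p
      = (ContinuousLinearMap.apply ℝ ℝ ((0 : ℝ), (1 : ℝ))).comp (fderiv ℝ (fderiv ℝ F) p) :=
    h.fderiv
  rw [this]; rfl

private lemma pd_symm {F : ℝ × ℝ → ℝ} (h4 : ContDiff ℝ 4 F) (p : ℝ × ℝ) :
    fderiv ℝ (pd1 F) p (0, 1) = fderiv ℝ (pd2 F) p (1, 0) := by
  rw [fderiv_pd1 h4, fderiv_pd2 h4]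
  exact (h4.contDiffAt.isSymmSndFDerivAt (by norm_num)).eq _ _

private def Fα (α : ℝ → ℝ → ℝ) : ℝ × ℝ → ℝ := fun p => α p.1 p.2

/-- At an evolutionary singularity x*, with a = ∂₁₁f(x*;x*) and c = ∂₂₂f(x*;x*),
the identity α(x*,x*)²(a+c) = 2r(x*)(α∂₁₂α − ∂₁α∂₂α)(x*,x*) holds. -/
theorem a_plus_c_formula
    (lam mu : ℝ → ℝ) (α : ℝ → ℝ → ℝ)
    (hlam : ContDiff ℝ 3 lam) (hmu : ContDiff ℝ 3 mu)
    (hα : ContDiff ℝ 4 (fun p : ℝ × ℝ => α p.1 p.2))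
    (hαpos : ∀ x : ℝ, 0 < α x x)
    (xs : ℝ) (hrpos : 0 < lam xs - mu xs)
    (hsing : deriv (fun u => lam u - mu u) xs
      = (lam xs - mu xs) * q1 α xs xs / α xs xs) :
    let a : ℝ := deriv (deriv (fun y => fit lam mu α y xs)) xs
    let c : ℝ := deriv (deriv (fun x => fit lam mu α xs x)) xs
    (α xs xs) ^ 2 * (a + c)
      = 2 * (lam xs - mu xs) * (α xs xs * q12 α xs xs - q1 α xs xs * q2 α xs xs) := by
  intro a c
  have hF4 : ContDiff ℝ 4 (Fα α) := hα
  have hFd : Differentiable ℝ (Fα α) := hF4.differentiable (by norm_num)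
  have hA1d : Differentiable ℝ (pd1 (Fα α)) := (pd1_contDiff hF4).differentiable (by norm_num)
  have hA2d : Differentiable ℝ (pd2 (Fα α)) := (pd2_contDiff hF4).differentiable (by norm_num)
  have hr3 : ContDiff ℝ 3 (fun x => lam x - mu x) := hlam.sub hmu
  have hrd : Differentiable ℝ (fun x => lam x - mu x) := hr3.differentiable (by norm_num)
  have hr2 : ContDiff ℝ 2 (deriv fun x => lam x - mu x) := by
    have h3' : ContDiff ℝ (2 + 1) (fun x => lam x - mu x) := by
      convert hr3 using 2
      norm_num
    exact (contDiff_succ_iff_deriv.mp h3').2.2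
  have hr'd : Differentiable ℝ (deriv fun x => lam x - mu x) := hr2.differentiable (by norm_num)
  -- value of q1, q2, q12
  have hq1v : q1 α xs xs = pd1 (Fα α) (xs, xs) := (slice1 (Fα α) xs xs (hFd _)).deriv
  have hq2v : q2 α xs xs = pd2 (Fα α) (xs, xs) := (slice2 (Fα α) xs xs (hFd _)).deriv
  have hq12v : q12 α xs xs = pd2 (pd1 (Fα α)) (xs, xs) := by
    have he : (fun v => q1 α xs v) = fun v => pd1 (Fα α) (xs, v) :=
      funext fun v => (slice1 (Fα α) xs v (hFd _)).deriv
    show deriv (fun v => q1 α xs v) xs = _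
    rw [he]
    exact (slice2 (pd1 (Fα α)) xs xs (hA1d _)).deriv
  have hsymv : pd2 (pd1 (Fα α)) (xs, xs) = pd1 (pd2 (Fα α)) (xs, xs) := pd_symm hF4 _
  -- first derivative in y
  have hstep_a : (deriv fun y => fit lam mu α y xs)
      = fun y => deriv (fun u => lam u - mu u) y
          - pd1 (Fα α) (y, xs) * ((lam xs - mu xs) / α xs xs) := by
    funext y
    have h1 : HasDerivAt (fun u => lam u - mu u) (deriv (fun u => lam u - mu u) y) y :=
      (hrd y).hasDerivAt
    have h2 : HasDerivAt (fun u => Fα α (u, xs)) (pd1 (Fα α) (y, xs)) y :=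
      slice1 (Fα α) y xs (hFd _)
    exact (h1.sub (h2.mul_const _)).deriv
  -- second derivative in y at xs
  have hA : HasDerivAt (fun y => deriv (fun u => lam u - mu u) y
        - pd1 (Fα α) (y, xs) * ((lam xs - mu xs) / α xs xs))
      (deriv (deriv fun u => lam u - mu u) xs
        - pd1 (pd1 (Fα α)) (xs, xs) * ((lam xs - mu xs) / α xs xs)) xs :=
    ((hr'd xs).hasDerivAt).sub ((slice1 (pd1 (Fα α)) xs xs (hA1d _)).mul_const _)
  have ha : a = deriv (deriv fun u => lam u - mu u) xs
      - pd1 (pd1 (Fα α)) (xs, xs) * ((lam xs - mu xs) / α xs xs) := by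
    show deriv (deriv fun y => fit lam mu α y xs) xs = _
    rw [hstep_a]; exact hA.deriv
  -- first derivative in x
  have hg : ∀ x, HasDerivAt (fun t => α t t)
      (pd1 (Fα α) (x, x) + pd2 (Fα α) (x, x)) x := fun x => sliceD (Fα α) x (hFd _)
  have hdiv : ∀ x, HasDerivAt (fun t => (lam t - mu t) / α t t)
      ((deriv (fun u => lam u - mu u) x * α x x
        - (lam x - mu x) * (pd1 (Fα α) (x, x) + pd2 (Fα α) (x, x))) / α x x ^ 2) x :=
    fun x => ((hrd x).hasDerivAt).div (hg x) (ne_of_gt (hαpos x))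
  have hstep_c : (deriv fun x => fit lam mu α xs x)
      = fun x => 0 - (pd2 (Fα α) (xs, x) * ((lam x - mu x) / α x x)
          + α xs x * ((deriv (fun u => lam u - mu u) x * α x x
            - (lam x - mu x) * (pd1 (Fα α) (x, x) + pd2 (Fα α) (x, x))) / α x x ^ 2)) := by
    funext x
    have h2 : HasDerivAt (fun v => α xs v) (pd2 (Fα α) (xs, x)) x := slice2 (Fα α) xs x (hFd _)
    exact ((hasDerivAt_const x (lam xs - mu xs)).sub (h2.mul (hdiv x))).deriv
  -- second derivative in x at xs
  have t1 : HasDerivAt (fun x => pd2 (Fα α) (xs, x)) (pd2 (pd2 (Fα α)) (xs, xs)) xs :=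
    slice2 (pd2 (Fα α)) xs xs (hA2d _)
  have t3 : HasDerivAt (fun x => α xs x) (pd2 (Fα α) (xs, xs)) xs := slice2 (Fα α) xs xs (hFd _)
  have t4a : HasDerivAt (fun x => deriv (fun u => lam u - mu u) x)
      (deriv (deriv fun u => lam u - mu u) xs) xs := (hr'd xs).hasDerivAt
  have hg1 : HasDerivAt (fun x => pd1 (Fα α) (x, x) + pd2 (Fα α) (x, x))
      ((pd1 (pd1 (Fα α)) (xs, xs) + pd2 (pd1 (Fα α)) (xs, xs))
        + (pd1 (pd2 (Fα α)) (xs, xs) + pd2 (pd2 (Fα α)) (xs, xs))) xs :=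
    (sliceD (pd1 (Fα α)) xs (hA1d _)).add (sliceD (pd2 (Fα α)) xs (hA2d _))
  have tQ := (t4a.mul (hg xs)).sub (((hrd xs).hasDerivAt).mul hg1)
  have t5 := (hg xs).pow 2
  have hdiv2 := tQ.div t5 (pow_ne_zero 2 (ne_of_gt (hαpos xs)))
  have hC := (hasDerivAt_const xs ((0:ℝ))).sub ((t1.mul (hdiv xs)).add (t3.mul hdiv2))
  simp only [Pi.sub_def, Pi.add_def, Pi.mul_def, Pi.div_def, Pi.pow_def] at hC
  -- singularity
  have hR1 : deriv (fun u => lam u - mu u) xs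
      = (lam xs - mu xs) * pd1 (Fα α) (xs, xs) / α xs xs := by rw [hsing, hq1v]
  have hGne : α xs xs ≠ 0 := ne_of_gt (hαpos xs)
  rw [ha, show c = deriv (deriv fun x => fit lam mu α xs x) xs from rfl,
    hstep_c, hC.deriv, hq12v, hq1v, hq2v, hsymv, hR1]
  field_simp
  ring
end

section
/- For the model with μ ≡ 0, λ(x) = exp(−x²/(2σ_b²)), α(x,y) = exp(−(x−y)²/(2σ_α²)), the fitness f(y;x) = λ(y) − α(y,x)λ(x) has exactly one evolutionary singularity, x* = 0, and at x* = 0: ∂₁₁f(0;0) = 1/σ_α² − 1/σ_b² and ∂₂₂f(0;0) = 1/σ_α² + 1/σ_b². In particular ∂₁₁f(0;0) + ∂₂₂f(0;0) > 0 always, and ∂₁₁f(0;0) > 0 if and only if σ_α < σ_b. -/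
private lemma Ehas' (c a t : ℝ) :
    HasDerivAt (fun y : ℝ => Real.exp (c * (y - a) ^ 2))
      (2 * c * (t - a) * Real.exp (c * (t - a) ^ 2)) t := by
  have h : HasDerivAt (fun y : ℝ => c * (y - a) ^ 2) (2 * c * (t - a)) t := by
    have := (((hasDerivAt_id t).sub_const a).pow 2).const_mul c
    simp only [id_eq] at this
    refine this.congr_deriv ?_
    push_cast
    ring
  simpa [mul_comm] using h.exp

private lemma Ehas (c t : ℝ) :
    HasDerivAt (fun y : ℝ => Real.exp (c * y ^ 2))
      (2 * c * t * Real.exp (c * t ^ 2)) t := by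
  simpa using Ehas' c 0 t

private lemma lin_has (c : ℝ) : HasDerivAt (fun t : ℝ => 2 * c * t) (2 * c) 0 := by
  simpa using (hasDerivAt_id (0 : ℝ)).const_mul (2 * c)

private lemma Esub2 (c d : ℝ) :
    deriv (deriv (fun t : ℝ => Real.exp (c * t ^ 2) - Real.exp (d * t ^ 2))) 0
      = 2 * c - 2 * d := by
  have h : deriv (fun t : ℝ => Real.exp (c * t ^ 2) - Real.exp (d * t ^ 2))
      = fun t => 2 * c * t * Real.exp (c * t ^ 2) - 2 * d * t * Real.exp (d * t ^ 2) :=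
    funext fun t => ((Ehas c t).sub (Ehas d t)).deriv
  rw [h]
  have H := ((lin_has c).mul (Ehas c 0)).sub ((lin_has d).mul (Ehas d 0))
  have H' : HasDerivAt (fun t => 2 * c * t * Real.exp (c * t ^ 2)
      - 2 * d * t * Real.exp (d * t ^ 2)) (2 * c - 2 * d) 0 := by
    refine H.congr_deriv ?_
    simp
  exact H'.deriv

private lemma Econst2 (k c : ℝ) :
    deriv (deriv (fun t : ℝ => k - Real.exp (c * t ^ 2))) 0 = -(2 * c) := by
  have h : deriv (fun t : ℝ => k - Real.exp (c * t ^ 2))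
      = fun t => -(2 * c * t * Real.exp (c * t ^ 2)) :=
    funext fun t => ((Ehas c t).const_sub k).deriv
  rw [h]
  have H' : HasDerivAt (fun t => -(2 * c * t * Real.exp (c * t ^ 2))) (-(2 * c)) 0 := by
    have := ((lin_has c).mul (Ehas c 0)).neg
    refine this.congr_deriv ?_
    simp
  exact H'.deriv

/-- In the Gaussian example (μ ≡ 0, λ(x) = exp(−x²/2σ_b²),
α(x,y) = exp(−(x−y)²/2σ_α²)), the fitness f(y;x) = λ(y) − α(y,x)λ(x) has x* = 0 as
its unique evolutionary singularity, where ∂₁₁f(0;0) = 1/σ_α² − 1/σ_b² and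
∂₂₂f(0;0) = 1/σ_α² + 1/σ_b²; their sum is always positive and ∂₁₁f(0;0) > 0 iff
σ_α < σ_b. -/
theorem gaussian_model_singularity (σb σα : ℝ) (hσb : 0 < σb) (hσα : 0 < σα) :
    let lam : ℝ → ℝ := fun x => Real.exp (-x ^ 2 / (2 * σb ^ 2))
    let α : ℝ → ℝ → ℝ := fun x y => Real.exp (-(x - y) ^ 2 / (2 * σα ^ 2))
    let f : ℝ → ℝ → ℝ := fun y x => lam y - α y x * lam x
    (∀ xs : ℝ, deriv (fun y => f y xs) xs = 0 ↔ xs = 0) ∧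
    deriv (deriv (fun y => f y 0)) 0 = 1 / σα ^ 2 - 1 / σb ^ 2 ∧
    deriv (deriv (fun x => f 0 x)) 0 = 1 / σα ^ 2 + 1 / σb ^ 2 ∧
    0 < deriv (deriv (fun y => f y 0)) 0 + deriv (deriv (fun x => f 0 x)) 0 ∧
    (0 < deriv (deriv (fun y => f y 0)) 0 ↔ σα < σb) := by
  intro lam α f
  have hb2 : (σb : ℝ) ^ 2 ≠ 0 := pow_ne_zero 2 hσb.ne'
  have ha2 : (σα : ℝ) ^ 2 ≠ 0 := pow_ne_zero 2 hσα.ne'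
  have h2 : deriv (deriv (fun y => f y 0)) 0 = 1 / σα ^ 2 - 1 / σb ^ 2 := by
    have e2 : (fun y => f y 0)
        = fun y => Real.exp (-(2 * σb ^ 2)⁻¹ * y ^ 2) - Real.exp (-(2 * σα ^ 2)⁻¹ * y ^ 2) := by
      funext y
      show Real.exp (-y ^ 2 / (2 * σb ^ 2))
          - Real.exp (-(y - 0) ^ 2 / (2 * σα ^ 2)) * Real.exp (-(0:ℝ) ^ 2 / (2 * σb ^ 2)) = _
      rw [show -(y - 0) ^ 2 / (2 * σα ^ 2) = -(2 * σα ^ 2)⁻¹ * y ^ 2 by ring,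
        show -(0:ℝ) ^ 2 / (2 * σb ^ 2) = 0 by ring,
        show -y ^ 2 / (2 * σb ^ 2) = -(2 * σb ^ 2)⁻¹ * y ^ 2 by ring,
        Real.exp_zero, mul_one]
    rw [e2, Esub2]
    field_simp
    ring
  have h3 : deriv (deriv (fun x => f 0 x)) 0 = 1 / σα ^ 2 + 1 / σb ^ 2 := by
    have e3 : (fun x => f 0 x)
        = fun x => 1 - Real.exp (-((2 * σα ^ 2)⁻¹ + (2 * σb ^ 2)⁻¹) * x ^ 2) := by
      funext x
      show Real.exp (-(0:ℝ) ^ 2 / (2 * σb ^ 2))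
          - Real.exp (-(0 - x) ^ 2 / (2 * σα ^ 2)) * Real.exp (-x ^ 2 / (2 * σb ^ 2)) = _
      rw [← Real.exp_add,
        show -(0:ℝ) ^ 2 / (2 * σb ^ 2) = 0 by ring, Real.exp_zero,
        show -(0 - x) ^ 2 / (2 * σα ^ 2) + -x ^ 2 / (2 * σb ^ 2)
          = -((2 * σα ^ 2)⁻¹ + (2 * σb ^ 2)⁻¹) * x ^ 2 by ring]
    rw [e3, Econst2]
    field_simp
  refine ⟨?_, h2, h3, ?_, ?_⟩
  · intro xs
    have e1 : (fun y => f y xs)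
        = fun y => Real.exp (-(2 * σb ^ 2)⁻¹ * y ^ 2)
          - Real.exp (-(2 * σα ^ 2)⁻¹ * (y - xs) ^ 2) * lam xs := by
      funext y
      show Real.exp (-y ^ 2 / (2 * σb ^ 2))
          - Real.exp (-(y - xs) ^ 2 / (2 * σα ^ 2)) * lam xs = _
      rw [show -y ^ 2 / (2 * σb ^ 2) = -(2 * σb ^ 2)⁻¹ * y ^ 2 by ring,
        show -(y - xs) ^ 2 / (2 * σα ^ 2) = -(2 * σα ^ 2)⁻¹ * (y - xs) ^ 2 by ring]
    have H : HasDerivAt (fun y => Real.exp (-(2 * σb ^ 2)⁻¹ * y ^ 2)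
        - Real.exp (-(2 * σα ^ 2)⁻¹ * (y - xs) ^ 2) * lam xs)
        (2 * -(2 * σb ^ 2)⁻¹ * xs * Real.exp (-(2 * σb ^ 2)⁻¹ * xs ^ 2)) xs := by
      have := (Ehas (-(2 * σb ^ 2)⁻¹) xs).sub
        ((Ehas' (-(2 * σα ^ 2)⁻¹) xs xs).mul_const (lam xs))
      exact this.congr_deriv (by simp)
    rw [e1, H.deriv]
    constructor
    · intro h
      rcases mul_eq_zero.mp h with h' | h'
      · rcases mul_eq_zero.mp h' with h'' | h''
        · exfalso
          rw [show (2:ℝ) * -(2 * σb ^ 2)⁻¹ = -(σb ^ 2)⁻¹ by field_simp] at h''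
          exact (inv_ne_zero hb2) (neg_eq_zero.mp h'')
        · exact h''
      · exact absurd h' (Real.exp_ne_zero _)
    · rintro rfl
      simp
  · rw [h2, h3]
    have : 0 < 1 / σα ^ 2 := by positivity
    linarith
  · rw [h2]
    constructor
    · intro h
      by_contra hle
      push_neg at hle
      have hsq : σb ^ 2 ≤ σα ^ 2 := by nlinarith
      have : 1 / σα ^ 2 ≤ 1 / σb ^ 2 := by
        apply one_div_le_one_div_of_le (by positivity) hsq
      linarith
    · intro h
      have hsq : σα ^ 2 < σb ^ 2 := by nlinarith
      have : 1 / σb ^ 2 < 1 / σα ^ 2 :=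
        one_div_lt_one_div_of_lt (by positivity) hsq
      linarith
end

section
/- Let f : ℝ² → ℝ be C² with f(x;x)=0 on the diagonal, let x* be an evolutionary singularity with a = ∂₁₁f(x*;x*) < 0, and suppose ∂₁₁f(u;v) < 0 for all (u,v) in a neighborhood of (x*,x*). Then for all x < z < y in that neighborhood: if f(x;y) ≥ 0 then f(z;y) > 0, and if f(y;x) ≥ 0 then f(z;x) > 0 (a trait strictly between two mutually non-inferior traits has positive fitness against each). -/
lemma strictConcave_pos_between (g : ℝ → ℝ) (s : Set ℝ)
    (hs : StrictConcaveOn ℝ s g) {x z y : ℝ} (hx : x ∈ s) (hy : y ∈ s)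
    (hxz : x < z) (hzy : z < y) (hgx : 0 ≤ g x) (hgy : 0 ≤ g y) : 0 < g z := by
  have hxy : x < y := hxz.trans hzy
  set t : ℝ := (y - z) / (y - x) with ht
  have hyx : (0:ℝ) < y - x := by linarith
  have ht0 : 0 < t := div_pos (by linarith) hyx
  have ht1 : 0 < 1 - t := by
    have : t < 1 := (div_lt_one hyx).mpr (by linarith)
    linarith
  have hz : t • x + (1 - t) • y = z := by
    simp only [smul_eq_mul, ht]
    field_simp
    ring
  have hlt := hs.2 hx hy hxy.ne ht0 ht1 (by ring)
  rw [hz] at hlt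
  simp only [smul_eq_mul] at hlt
  nlinarith [mul_nonneg ht0.le hgx, mul_nonneg ht1.le hgy]

/-- Near an evolutionary singularity x* with a = ∂₁₁f(x*;x*) < 0 (and ∂₁₁f < 0 on a
δ-neighborhood), a trait z strictly between two mutually non-inferior traits x < z < y
has positive fitness against each of them.  Here `f (u, v)` denotes f(u;v). -/
theorem between_traits_positive_fitness
    (f : ℝ × ℝ → ℝ) (hf : ContDiff ℝ 2 f) (hdiag : ∀ x : ℝ, f (x, x) = 0)
    (xs δ : ℝ) (hδ : 0 < δ)
    (hsing1 : p1 f xs xs = 0) (hsing2 : p2 f xs xs = 0)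
    (ha : p11 f xs xs < 0)
    (hloc : ∀ u v : ℝ, |u - xs| < δ → |v - xs| < δ → p11 f u v < 0) :
    ∀ x z y : ℝ, |x - xs| < δ → |z - xs| < δ → |y - xs| < δ →
      x < z → z < y →
      (0 ≤ f (x, y) → 0 < f (z, y)) ∧ (0 ≤ f (y, x) → 0 < f (z, x)) := by
  have hmem : ∀ u : ℝ, |u - xs| < δ ↔ u ∈ Set.Ioo (xs - δ) (xs + δ) := by
    intro u
    rw [abs_sub_lt_iff, Set.mem_Ioo]
    constructor <;> intro h <;> constructor <;> linarith [h.1, h.2]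
  have hconc : ∀ b : ℝ, |b - xs| < δ →
      StrictConcaveOn ℝ (Set.Ioo (xs - δ) (xs + δ)) (fun u => f (u, b)) := by
    intro b hb
    apply strictConcaveOn_of_deriv2_neg (convex_Ioo _ _)
    · exact (hf.continuous.comp (by continuity)).continuousOn
    · intro u hu
      rw [interior_Ioo] at hu
      have : deriv^[2] (fun u => f (u, b)) u = p11 f u b := by
        simp only [Function.iterate_succ, Function.iterate_zero, Function.comp_apply, id,
          p11, p1]
      rw [this]
      exact hloc u b ((hmem u).mpr hu) hb
  intro x z y hx hz hy hxz hzy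
  constructor
  · intro hpos
    exact strictConcave_pos_between _ _ (hconc y hy) ((hmem x).mp hx) ((hmem y).mp hy)
      hxz hzy hpos (le_of_eq (hdiag y).symm)
  · intro hpos
    exact strictConcave_pos_between _ _ (hconc x hx) ((hmem x).mp hx) ((hmem y).mp hy)
      hxz hzy (le_of_eq (hdiag x).symm) hpos
end
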